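/- For n = 3, every off-diagonal Gell-Mann matrix σ_{kl} (k ≠ l) is an eigenvector of the GKSL generator L_{LF}[X] = Σ_{i,j=0}^{2} γ_{ij}(σ_{ij}Xσ_{ij} − ½{σ_{ij}²,X}); for instance L_{LF}[σ_{01}] = −½(4γ_{10}+4γ_{11}+γ̃_{02}+γ̃_{12})σ_{01}, where γ̃_{kl} := γ_{kl}+γ_{lk}. -/

import Mathlib

open Matrix BigOperators

/-- The generalized Gell-Mann matrices on `ℂ^n`:
`gm n a b` is `σ_{ab}` (symmetric for `a < b`, antisymmetric for `a > b`,
diagonal for `a = b > 0`, identity for `a = b = 0`). -/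
noncomputable def gm (n : ℕ) (a b : Fin n) : Matrix (Fin n) (Fin n) ℂ :=
  if a < b then Matrix.single a b 1 + Matrix.single b a 1
  else if b < a then (-Complex.I) • (Matrix.single b a 1 - Matrix.single a b 1)
  else if (a : ℕ) = 0 then 1
  else (Real.sqrt (2 / ((a : ℕ) * ((a : ℕ) + 1))) : ℂ) •
    ((∑ i : Fin n, if (i : ℕ) < (a : ℕ) then Matrix.single i i 1 else 0)
      - ((a : ℕ) : ℂ) • Matrix.single a a 1)


lemma gm00 : gm 3 0 0 = !![1,0,0;0,1,0;0,0,1] := by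
  ext i j; fin_cases i <;> fin_cases j <;>
    simp [gm, Matrix.one_apply, Matrix.single, Matrix.vecHead, Matrix.vecTail]
lemma gm01 : gm 3 0 1 = !![0,1,0;1,0,0;0,0,0] := by
  ext i j; fin_cases i <;> fin_cases j <;>
    simp [gm, Matrix.single, Matrix.vecHead, Matrix.vecTail,
      show ((0:Fin 3) < 1) from by decide]
lemma gm10 : gm 3 1 0 = !![0,-Complex.I,0;Complex.I,0,0;0,0,0] := by
  ext i j; fin_cases i <;> fin_cases j <;>
    simp [gm, Matrix.single, Matrix.vecHead, Matrix.vecTail,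
      show ¬((1:Fin 3) < 0) from by decide, show ((0:Fin 3) < 1) from by decide]
lemma gm02 : gm 3 0 2 = !![0,0,1;0,0,0;1,0,0] := by
  ext i j; fin_cases i <;> fin_cases j <;>
    simp [gm, Matrix.single, Matrix.vecHead, Matrix.vecTail,
      show ((0:Fin 3) < 2) from by decide]
lemma gm20 : gm 3 2 0 = !![0,0,-Complex.I;0,0,0;Complex.I,0,0] := by
  ext i j; fin_cases i <;> fin_cases j <;>
    simp [gm, Matrix.single, Matrix.vecHead, Matrix.vecTail,
      show ¬((2:Fin 3) < 0) from by decide, show ((0:Fin 3) < 2) from by decide]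
lemma gm12 : gm 3 1 2 = !![0,0,0;0,0,1;0,1,0] := by
  ext i j; fin_cases i <;> fin_cases j <;>
    simp [gm, Matrix.single, Matrix.vecHead, Matrix.vecTail,
      show ((1:Fin 3) < 2) from by decide]
lemma gm21 : gm 3 2 1 = !![0,0,0;0,0,-Complex.I;0,Complex.I,0] := by
  ext i j; fin_cases i <;> fin_cases j <;>
    simp [gm, Matrix.single, Matrix.vecHead, Matrix.vecTail,
      show ¬((2:Fin 3) < 1) from by decide, show ((1:Fin 3) < 2) from by decide]
lemma gm11 : gm 3 1 1 = !![1,0,0;0,-1,0;0,0,0] := by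
  ext i j; fin_cases i <;> fin_cases j <;>
    simp [gm, Matrix.single, Fin.sum_univ_three, Matrix.vecHead, Matrix.vecTail] <;>
    norm_num
lemma gm22 : gm 3 2 2 = (((Real.sqrt 3)⁻¹ : ℝ) : ℂ) • !![1,0,0;0,1,0;0,0,-2] := by
  have key : Real.sqrt (2 / ((((2:Fin 3) : ℕ) : ℝ) * ((((2:Fin 3) : ℕ) : ℝ) + 1)))
      = (Real.sqrt 3)⁻¹ := by
    rw [show (2 / ((((2:Fin 3) : ℕ) : ℝ) * ((((2:Fin 3) : ℕ) : ℝ) + 1))) = 3⁻¹ by norm_num,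
      Real.sqrt_inv]
  rw [gm]
  norm_num [key]
  ext i j; fin_cases i <;> fin_cases j <;>
    simp [Matrix.single, Fin.sum_univ_three, Matrix.vecHead, Matrix.vecTail] <;>
    norm_num

set_option maxHeartbeats 2000000 in
lemma Lkey (γ : Fin 3 → Fin 3 → ℝ) (X : Matrix (Fin 3) (Fin 3) ℂ) :
    (∑ i, ∑ j, (γ i j : ℂ) •
        (gm 3 i j * X * gm 3 i j
          - (1 / 2 : ℂ) • (gm 3 i j * gm 3 i j * X + X * (gm 3 i j * gm 3 i j)))) =
    !![(-1 : ℂ) * (γ 0 1 : ℂ) * X 0 0 + (1 : ℂ) * (γ 0 1 : ℂ) * X 1 1 + (-1 : ℂ) * (γ 0 2 : ℂ) * X 0 0 + (1 : ℂ) * (γ 0 2 : ℂ) * X 2 2 + (-1 : ℂ) * (γ 1 0 : ℂ) * X 0 0 + (1 : ℂ) * (γ 1 0 : ℂ) * X 1 1 + (-1 : ℂ) * (γ 2 0 : ℂ) * X 0 0 + (1 : ℂ) * (γ 2 0 : ℂ) * X 2 2, (-1 : ℂ) * (γ 0 1 : ℂ) * X 0 1 + (1 : ℂ) * (γ 0 1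 : ℂ) * X 1 0 + (-1/2 : ℂ) * (γ 0 2 : ℂ) * X 0 1 + (-1 : ℂ) * (γ 1 0 : ℂ) * X 0 1 + (-1 : ℂ) * (γ 1 0 : ℂ) * X 1 0 + (-2 : ℂ) * (γ 1 1 : ℂ) * X 0 1 + (-1/2 : ℂ) * (γ 1 2 : ℂ) * X 0 1 + (-1/2 : ℂ) * (γ 2 0 : ℂ) * X 0 1 + (-1/2 : ℂ) * (γ 2 1 : ℂ) * X 0 1, (-1/2 : ℂ) * (γ 0 1 : ℂ) * X 0 2 + (-1 : ℂ) * (γ 0 2 : ℂ) * X 0 2 + (1 : ℂ) * (γ 0 2 : ℂ) * X 2 0 + (-1/2 : ℂ) * (γ 1 0 : ℂ) * X 0 2 + (-1/2 : ℂ) * (γ 1 1 : ℂ) * X 0 2 + (-1/2 : ℂ) * (γ 1 2 : ℂ) * X 0 2 + (-1 : ℂ) * (γ 2 0 : ℂ) * X 0 2 + (-1 : ℂ) * (γ 2 0 : ℂ) * X 2 0 + (-1/2 : ℂ) * (γ 2 1 : ℂ) * X 0 2 + (-3/2 : ℂ) * (γ 2 2 : ℂ) * X 0 2;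
      (1 : ℂ) * (γ 0 1 : ℂ) * X 0 1 + (-1 : ℂ) * (γ 0 1 : ℂ) * X 1 0 + (-1/2 : ℂ) * (γ 0 2 : ℂ) * X 1 0 + (-1 : ℂ) * (γ 1 0 : ℂ) * X 0 1 + (-1 : ℂ) * (γ 1 0 : ℂ) * X 1 0 + (-2 : ℂ) * (γ 1 1 : ℂ) * X 1 0 + (-1/2 : ℂ) * (γ 1 2 : ℂ) * X 1 0 + (-1/2 : ℂ) * (γ 2 0 : ℂ) * X 1 0 + (-1/2 : ℂ) * (γ 2 1 : ℂ) * X 1 0, (1 : ℂ) * (γ 0 1 : ℂ) * X 0 0 + (-1 : ℂ) * (γ 0 1 : ℂ) * X 1 1 + (1 : ℂ) * (γ 1 0 : ℂ) * X 0 0 + (-1 : ℂ) * (γ 1 0 : ℂ) * X 1 1 + (-1 : ℂ) * (γ 1 2 : ℂ) * X 1 1 + (1 : ℂ) * (γ 1 2 : ℂ) * X 2 2 + (-1 : ℂ) * (γ 2 1 : ℂ) * X 1 1 + (1 : ℂ) * (γ 2 1 : ℂ) * X 2 2, (-1/2 : ℂ) * (γ 0 1 : ℂ) * X 1 2 + (-1/2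 : ℂ) * (γ 0 2 : ℂ) * X 1 2 + (-1/2 : ℂ) * (γ 1 0 : ℂ) * X 1 2 + (-1/2 : ℂ) * (γ 1 1 : ℂ) * X 1 2 + (-1 : ℂ) * (γ 1 2 : ℂ) * X 1 2 + (1 : ℂ) * (γ 1 2 : ℂ) * X 2 1 + (-1/2 : ℂ) * (γ 2 0 : ℂ) * X 1 2 + (-1 : ℂ) * (γ 2 1 : ℂ) * X 1 2 + (-1 : ℂ) * (γ 2 1 : ℂ) * X 2 1 + (-3/2 : ℂ) * (γ 2 2 : ℂ) * X 1 2;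
      (-1/2 : ℂ) * (γ 0 1 : ℂ) * X 2 0 + (1 : ℂ) * (γ 0 2 : ℂ) * X 0 2 + (-1 : ℂ) * (γ 0 2 : ℂ) * X 2 0 + (-1/2 : ℂ) * (γ 1 0 : ℂ) * X 2 0 + (-1/2 : ℂ) * (γ 1 1 : ℂ) * X 2 0 + (-1/2 : ℂ) * (γ 1 2 : ℂ) * X 2 0 + (-1 : ℂ) * (γ 2 0 : ℂ) * X 0 2 + (-1 : ℂ) * (γ 2 0 : ℂ) * X 2 0 + (-1/2 : ℂ) * (γ 2 1 : ℂ) * X 2 0 + (-3/2 : ℂ) * (γ 2 2 : ℂ) * X 2 0, (-1/2 : ℂ) * (γ 0 1 : ℂ) * X 2 1 + (-1/2 : ℂ) * (γ 0 2 : ℂ) * X 2 1 + (-1/2 : ℂ) * (γ 1 0 : ℂ) * X 2 1 + (-1/2 : ℂ) * (γ 1 1 : ℂ) * X 2 1 + (1 : ℂ) * (γ 1 2 : ℂ) * X 1 2 + (-1 : ℂ) * (γ 1 2 : ℂ) * X 2 1 + (-1/2 : ℂ) * (γ 2 0 : ℂ) * X 2 1 + (-1 : ℂ) * (γ 2 1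 : ℂ) * X 1 2 + (-1 : ℂ) * (γ 2 1 : ℂ) * X 2 1 + (-3/2 : ℂ) * (γ 2 2 : ℂ) * X 2 1, (1 : ℂ) * (γ 0 2 : ℂ) * X 0 0 + (-1 : ℂ) * (γ 0 2 : ℂ) * X 2 2 + (1 : ℂ) * (γ 1 2 : ℂ) * X 1 1 + (-1 : ℂ) * (γ 1 2 : ℂ) * X 2 2 + (1 : ℂ) * (γ 2 0 : ℂ) * X 0 0 + (-1 : ℂ) * (γ 2 0 : ℂ) * X 2 2 + (1 : ℂ) * (γ 2 1 : ℂ) * X 1 1 + (-1 : ℂ) * (γ 2 1 : ℂ) * X 2 2] := by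
  have hs : (((Real.sqrt 3)⁻¹ : ℝ) : ℂ) * (((Real.sqrt 3)⁻¹ : ℝ) : ℂ) = 1/3 := by
    rw [← Complex.ofReal_mul, ← mul_inv, Real.mul_self_sqrt (by norm_num)]
    norm_num
  simp only [Fin.sum_univ_three, gm00, gm01, gm02, gm10, gm11, gm12, gm20, gm21, gm22,
    Matrix.smul_mul, Matrix.mul_smul, smul_smul, hs]
  ext p q
  fin_cases p <;> fin_cases q <;>
    simp [Matrix.mul_apply, Matrix.vecMul, dotProduct, Fin.sum_univ_three,
      Matrix.vecHead, Matrix.vecTail] <;>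
    (try ring_nf) <;> (try simp only [Complex.I_sq]) <;> (try push_cast) <;> (try ring_nf)
lemma Lgm01 (γ : Fin 3 → Fin 3 → ℝ) :
    (∑ i, ∑ j, (γ i j : ℂ) •
        (gm 3 i j * gm 3 0 1 * gm 3 i j
          - (1 / 2 : ℂ) • (gm 3 i j * gm 3 i j * gm 3 0 1 + gm 3 0 1 * (gm 3 i j * gm 3 i j)))) =
    (-2*(γ 1 0 :ℂ) - 2*(γ 1 1:ℂ) - (1/2)*((γ 0 2:ℂ)+(γ 1 2:ℂ)+(γ 2 0:ℂ)+(γ 2 1:ℂ))) • gm 3 0 1 := by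
  rw [Lkey, gm01]
  ext p q
  fin_cases p <;> fin_cases q <;>
    simp [Matrix.vecHead, Matrix.vecTail] <;> push_cast <;> ring

lemma Lgm02 (γ : Fin 3 → Fin 3 → ℝ) :
    (∑ i, ∑ j, (γ i j : ℂ) •
        (gm 3 i j * gm 3 0 2 * gm 3 i j
          - (1 / 2 : ℂ) • (gm 3 i j * gm 3 i j * gm 3 0 2 + gm 3 0 2 * (gm 3 i j * gm 3 i j)))) =
    (-(1/2)*(γ 0 1:ℂ) - (1/2)*(γ 1 0:ℂ) - (1/2)*(γ 1 1:ℂ) - (1/2)*(γ 1 2:ℂ) - 2*(γ 2 0:ℂ) - (1/2)*(γ 2 1:ℂ) - (3/2)*(γ 2 2:ℂ)) • gm 3 0 2 := by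
  rw [Lkey, gm02]
  ext p q
  fin_cases p <;> fin_cases q <;>
    simp [Matrix.vecHead, Matrix.vecTail] <;> push_cast <;> ring

lemma Lgm10 (γ : Fin 3 → Fin 3 → ℝ) :
    (∑ i, ∑ j, (γ i j : ℂ) •
        (gm 3 i j * gm 3 1 0 * gm 3 i j
          - (1 / 2 : ℂ) • (gm 3 i j * gm 3 i j * gm 3 1 0 + gm 3 1 0 * (gm 3 i j * gm 3 i j)))) =
    (-2*(γ 0 1:ℂ) - 2*(γ 1 1:ℂ) - (1/2)*((γ 0 2:ℂ)+(γ 1 2:ℂ)+(γ 2 0:ℂ)+(γ 2 1:ℂ))) • gm 3 1 0 := by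
  rw [Lkey, gm10]
  ext p q
  fin_cases p <;> fin_cases q <;>
    simp [Matrix.vecHead, Matrix.vecTail] <;> push_cast <;> ring

lemma Lgm12 (γ : Fin 3 → Fin 3 → ℝ) :
    (∑ i, ∑ j, (γ i j : ℂ) •
        (gm 3 i j * gm 3 1 2 * gm 3 i j
          - (1 / 2 : ℂ) • (gm 3 i j * gm 3 i j * gm 3 1 2 + gm 3 1 2 * (gm 3 i j * gm 3 i j)))) =
    (-(1/2)*(γ 0 1:ℂ) - (1/2)*(γ 0 2:ℂ) - (1/2)*(γ 1 0:ℂ) - (1/2)*(γ 1 1:ℂ) - (1/2)*(γ 2 0:ℂ) - 2*(γ 2 1:ℂ) - (3/2)*(γ 2 2:ℂ)) • gm 3 1 2 := by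
  rw [Lkey, gm12]
  ext p q
  fin_cases p <;> fin_cases q <;>
    simp [Matrix.vecHead, Matrix.vecTail] <;> push_cast <;> ring

lemma Lgm20 (γ : Fin 3 → Fin 3 → ℝ) :
    (∑ i, ∑ j, (γ i j : ℂ) •
        (gm 3 i j * gm 3 2 0 * gm 3 i j
          - (1 / 2 : ℂ) • (gm 3 i j * gm 3 i j * gm 3 2 0 + gm 3 2 0 * (gm 3 i j * gm 3 i j)))) =
    (-(1/2)*(γ 0 1:ℂ) - 2*(γ 0 2:ℂ) - (1/2)*(γ 1 0:ℂ) - (1/2)*(γ 1 1:ℂ) - (1/2)*(γ 1 2:ℂ) - (1/2)*(γ 2 1:ℂ) - (3/2)*(γ 2 2:ℂ)) • gm 3 2 0 := by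
  rw [Lkey, gm20]
  ext p q
  fin_cases p <;> fin_cases q <;>
    simp [Matrix.vecHead, Matrix.vecTail] <;> push_cast <;> ring

lemma Lgm21 (γ : Fin 3 → Fin 3 → ℝ) :
    (∑ i, ∑ j, (γ i j : ℂ) •
        (gm 3 i j * gm 3 2 1 * gm 3 i j
          - (1 / 2 : ℂ) • (gm 3 i j * gm 3 i j * gm 3 2 1 + gm 3 2 1 * (gm 3 i j * gm 3 i j)))) =
    (-(1/2)*(γ 0 1:ℂ) - (1/2)*(γ 0 2:ℂ) - (1/2)*(γ 1 0:ℂ) - (1/2)*(γ 1 1:ℂ) - 2*(γ 1 2:ℂ) - (1/2)*(γ 2 0:ℂ) - (3/2)*(γ 2 2:ℂ)) • gm 3 2 1 := by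
  rw [Lkey, gm21]
  ext p q
  fin_cases p <;> fin_cases q <;>
    simp [Matrix.vecHead, Matrix.vecTail] <;> push_cast <;> ring



theorem LF_gellMann_three_offdiagonal_eigenvectors (γ : Fin 3 → Fin 3 → ℝ) :
    let L : Matrix (Fin 3) (Fin 3) ℂ → Matrix (Fin 3) (Fin 3) ℂ := fun X =>
      ∑ i, ∑ j, (γ i j : ℂ) •
        (gm 3 i j * X * gm 3 i j
          - (1 / 2 : ℂ) • (gm 3 i j * gm 3 i j * X + X * (gm 3 i j * gm 3 i j)))
    (∀ k l : Fin 3, k ≠ l → ∃ c : ℂ, L (gm 3 k l) = c • gm 3 k l) ∧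
      L (gm 3 0 1) = ((-(1 / 2) *
          (4 * γ 1 0 + 4 * γ 1 1 + (γ 0 2 + γ 2 0) + (γ 1 2 + γ 2 1)) : ℝ) : ℂ) •
        gm 3 0 1 := by
  intro L
  constructor
  · intro k l hkl
    fin_cases k <;> fin_cases l
    · exact absurd rfl hkl
    · exact ⟨_, Lgm01 γ⟩
    · exact ⟨_, Lgm02 γ⟩
    · exact ⟨_, Lgm10 γ⟩
    · exact absurd rfl hkl
    · exact ⟨_, Lgm12 γ⟩
    · exact ⟨_, Lgm20 γ⟩
    · exact ⟨_, Lgm21 γ⟩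
    · exact absurd rfl hkl
  · show (∑ i, ∑ j, (γ i j : ℂ) •
        (gm 3 i j * gm 3 0 1 * gm 3 i j
          - (1 / 2 : ℂ) • (gm 3 i j * gm 3 i j * gm 3 0 1 + gm 3 0 1 * (gm 3 i j * gm 3 i j)))) = _
    rw [Lgm01 γ]
    congr 1
    push_cast
    ring
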